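/- Under the N-component decomposition of a neutral partition μ into charged partitions (λ^{(r)}, p_r) with ∑ p_r = 0, the quantity κ(μ) = 2∑_{(i,j)∈μ}(j-i) satisfies κ(μ) = N² ∑_{r=1}^N κ(λ^{(r)}) + 2N² ∑_{r=1}^N p̃_r |λ^{(r)}| + (N²/3) ∑_{r=1}^N p̃_r³, where p̃_r = p_r + (r-(N+1)/2)/N. -/

import Mathlib

open Finset

lemma sum_cast_range (n : ℕ) : ∑ i ∈ range n, (i:ℚ) = n*(n-1)/2 := by
  induction n with
  | zero => simp
  | succ k ih => rw [sum_range_succ, ih]; push_cast; ring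

lemma sum_shift (c : ℚ) (n : ℕ) : ∑ i ∈ range n, ((i:ℚ)+c)
    = (n:ℚ)*((n:ℚ)-1)/2 + (n:ℚ)*c := by
  induction n with
  | zero => simp
  | succ k ih => rw [sum_range_succ, ih]; push_cast; ring

lemma sum_sq_shift (c : ℚ) (n : ℕ) : ∑ i ∈ range n, ((i:ℚ)+c)^2
    = (n:ℚ)^3/3 - (n:ℚ)^2/2 + (n:ℚ)/6 + c*((n:ℚ)^2 - n) + c^2*n := by
  induction n with
  | zero => simp
  | succ k ih => rw [sum_range_succ, ih]; push_cast; ring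

lemma sum_cube_shift (c : ℚ) (n : ℕ) : ∑ i ∈ range n, ((i:ℚ)+c)^3
    = (n:ℚ)^4/4 - (n:ℚ)^3/2 + (n:ℚ)^2/4
      + c*((n:ℚ)^3 - 3*(n:ℚ)^2/2 + (n:ℚ)/2) + c^2*(3*((n:ℚ)^2-n)/2) + c^3*n := by
  induction n with
  | zero => simp
  | succ k ih => rw [sum_range_succ, ih]; push_cast; ring

lemma rowLen_eq_zero {μ : YoungDiagram} {i : ℕ} (h : μ.colLen 0 ≤ i) : μ.rowLen i = 0 := by
  by_contra hc
  have : (i, 0) ∈ μ := YoungDiagram.mem_iff_lt_rowLen.2 (Nat.pos_of_ne_zero hc)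
  rw [YoungDiagram.mem_iff_lt_colLen] at this
  omega

lemma cells_sum (μ : YoungDiagram) {n : ℕ} (hn : μ.colLen 0 ≤ n) (g : ℕ → ℕ → ℚ) :
    ∑ c ∈ μ.cells, g c.1 c.2 = ∑ i ∈ range n, ∑ j ∈ range (μ.rowLen i), g i j := by
  have hc : μ.cells = (range n).biUnion (fun i => {i} ×ˢ range (μ.rowLen i)) := by
    ext ⟨i, j⟩
    simp only [YoungDiagram.mem_cells, Finset.mem_biUnion, Finset.mem_product,
      Finset.mem_singleton, Finset.mem_range, YoungDiagram.mem_iff_lt_rowLen]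
    constructor
    · intro hj
      have hpos : (i, 0) ∈ μ := YoungDiagram.mem_iff_lt_rowLen.2 (by omega)
      have := YoungDiagram.mem_iff_lt_colLen.1 hpos
      exact ⟨i, by omega, rfl, hj⟩
    · rintro ⟨a, _, rfl, hj⟩; exact hj
  rw [hc, Finset.sum_biUnion]
  · exact Finset.sum_congr rfl fun i _ => by rw [Finset.sum_product, Finset.sum_singleton]
  · intro a _ b _ hab
    simp only [Finset.disjoint_left, Finset.mem_product, Finset.mem_singleton]
    rintro ⟨x, y⟩ ⟨rfl, _⟩ ⟨rfl, _⟩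
    exact hab rfl



/-- The Maya diagram of a partition: the set `{μ_i - i + 1/2 : i ≥ 1} ⊆ ℤ + 1/2`,
realized inside `ℚ` (with the 0-indexed row lengths, `x_i = μ.rowLen i - (i+1) + 1/2`). -/
def maya (μ : YoungDiagram) : Set ℚ :=
  Set.range fun i : ℕ => (μ.rowLen i : ℚ) - i - 1 / 2

/-- The union of shifted, rescaled Maya diagrams
`⋃_{r=1}^{N} {N (x_i(λ⁽ʳ⁾) + p̃_r) : i ≥ 1}`, `p̃_r = p_r + (r - (N+1)/2)/N`,
associated to `N` charged partitions; `r : Fin N` stands for the 1-indexed label `r + 1`. -/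
def chargedMaya (N : ℕ) (lam : Fin N → YoungDiagram) (p : Fin N → ℤ) : Set ℚ :=
  ⋃ r : Fin N, Set.range fun i : ℕ =>
    (N : ℚ) * (((lam r).rowLen i : ℚ) - i - 1 / 2 + p r
      + (((r : ℚ) + 1) - ((N : ℚ) + 1) / 2) / N)

/-- `κ(μ) = 2 ∑_{(i,j) ∈ μ} (j - i)`, summed over the boxes of the Young diagram. -/
def kappa (μ : YoungDiagram) : ℤ :=
  2 * ∑ c ∈ μ.cells, ((c.2 : ℤ) - (c.1 : ℤ))

lemma kappa_eq (μ : YoungDiagram) {n : ℕ} (hn : μ.colLen 0 ≤ n) :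
    (kappa μ : ℚ) = ∑ i ∈ range n,
      ((μ.rowLen i : ℚ)^2 - μ.rowLen i - 2*i*(μ.rowLen i)) := by
  have h0 : (kappa μ : ℚ) = ∑ c ∈ μ.cells, (2*((c.2:ℚ) - c.1)) := by
    simp only [kappa]
    push_cast
    rw [Finset.mul_sum]
  rw [h0, cells_sum μ hn (fun i j => 2*((j:ℚ) - i))]
  refine Finset.sum_congr rfl fun i _ => ?_
  rw [Finset.sum_congr rfl (fun j _ => by ring : ∀ j ∈ range (μ.rowLen i),
    (2*((j:ℚ) - i)) = 2*(j:ℚ) - 2*i)]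
  rw [Finset.sum_sub_distrib, ← Finset.mul_sum, sum_cast_range, Finset.sum_const,
    Finset.card_range]
  ring

lemma card_eq (μ : YoungDiagram) {n : ℕ} (hn : μ.colLen 0 ≤ n) :
    (μ.card : ℚ) = ∑ i ∈ range n, (μ.rowLen i : ℚ) := by
  have h0 : (μ.card : ℚ) = ∑ c ∈ μ.cells, (1:ℚ) := by simp [YoungDiagram.card]
  rw [h0, cells_sum μ hn (fun _ _ => (1:ℚ))]
  simp


/-- `κ` formula for the `N`-component decomposition of a neutral partition:
`κ(μ) = N² ∑_r κ(λ⁽ʳ⁾) + 2N² ∑_r p̃_r |λ⁽ʳ⁾| + (N²/3) ∑_r p̃_r³`, where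
`p̃_r = p_r + (r - (N+1)/2)/N` (with `r` 1-indexed). -/
theorem charged_partition_kappa (N : ℕ) (hN : 1 ≤ N)
    (lam : Fin N → YoungDiagram) (p : Fin N → ℤ) (hp : ∑ r, p r = 0)
    (μ : YoungDiagram) (h : maya μ = chargedMaya N lam p) :
    (kappa μ : ℚ) = (N : ℚ) ^ 2 * ∑ r, (kappa (lam r) : ℚ)
      + 2 * (N : ℚ) ^ 2 * ∑ r : Fin N,
          ((p r : ℚ) + (((r : ℚ) + 1) - ((N : ℚ) + 1) / 2) / N) * ((lam r).card : ℚ)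
      + (N : ℚ) ^ 2 / 3 * ∑ r : Fin N,
          ((p r : ℚ) + (((r : ℚ) + 1) - ((N : ℚ) + 1) / 2) / N) ^ 3 := by
  have hN0 : (N:ℚ) ≠ 0 := by positivity
  have hNQ : (1:ℚ) ≤ N := by exact_mod_cast hN
  -- local definitions
  set D : Fin N → ℚ := fun r => (((r : ℚ) + 1) - ((N : ℚ) + 1) / 2) / N with hD
  set t : Fin N → ℚ := fun r => (p r : ℚ) + D r with ht
  set L : ℕ := μ.colLen 0 + (∑ r, ((lam r).colLen 0 + (p r).natAbs)) + 1 with hLdef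
  set m : Fin N → ℕ := fun r => (L + p r).toNat with hm
  set f : ℕ → ℚ := fun i => (μ.rowLen i : ℚ) - i - 1/2 with hf
  set e : Fin N → ℕ → ℚ := fun r i =>
    (N : ℚ) * (((lam r).rowLen i : ℚ) - i - 1/2 + p r + D r) with he
  -- basic bounds
  have hL1 : 1 ≤ L := by omega
  have hLr : ∀ r : Fin N, ((lam r).colLen 0 : ℤ) + (p r).natAbs + 1 ≤ L := by
    intro r
    have h1 : (lam r).colLen 0 + (p r).natAbs ≤ ∑ r, ((lam r).colLen 0 + (p r).natAbs) :=
      Finset.single_le_sum (f := fun r => ((lam r).colLen 0 + (p r).natAbs))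
        (fun i _ => Nat.zero_le _) (Finset.mem_univ r)
    omega
  have hmz : ∀ r : Fin N, ((m r : ℤ)) = (L:ℤ) + p r := by
    intro r
    have h1 : (0:ℤ) ≤ (L:ℤ) + p r := by have := hLr r; omega
    simp only [hm]
    exact Int.toNat_of_nonneg h1
  have hmL : ∀ r : Fin N, ((m r : ℚ)) = (L : ℚ) + (p r : ℚ) := by
    intro r
    have h2 := congrArg (fun z : ℤ => (z : ℚ)) (hmz r)
    simpa using h2
  have hmr : ∀ r : Fin N, (lam r).colLen 0 ≤ m r := by
    intro r
    have := hLr r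
    have h2 := hmz r
    omega
  have hNpos : (0:ℚ) < N := by positivity
  have hD1 : ∀ r : Fin N, -(1/2 : ℚ) < D r := by
    intro r
    have hDr : D r = (((r : ℚ) + 1) - ((N : ℚ) + 1) / 2) / N := rfl
    have hr0 : (0:ℚ) ≤ (r:ℚ) := Nat.cast_nonneg _
    rw [hDr, lt_div_iff₀ hNpos]
    linarith
  have hD2 : ∀ r : Fin N, D r < 1/2 := by
    intro r
    have hDr : D r = (((r : ℚ) + 1) - ((N : ℚ) + 1) / 2) / N := rfl
    have hr1 : (r:ℚ) + 1 ≤ (N:ℚ) := by exact_mod_cast r.2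
    rw [hDr, div_lt_iff₀ hNpos]
    linarith
  -- the two finsets
  set F₁ : Finset ℚ := (range (N*L)).image f with hF₁
  set F₂ : Finset ℚ :=
    ((Finset.univ : Finset (Fin N)).sigma fun r => range (m r)).image
      (fun s => e s.1 s.2) with hF₂
  have hKmu' : μ.colLen 0 ≤ N * L := le_trans (by omega) (Nat.le_mul_of_pos_left _ (by omega))
  have hcoe1 : (F₁ : Set ℚ) = maya μ ∩ Set.Ioi (-((N*L : ℕ) : ℚ)) := by
    ext x
    simp only [hF₁, Finset.coe_image, Finset.coe_range, Set.mem_image, Set.mem_Iio,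
      Set.mem_inter_iff, Set.mem_Ioi, maya, Set.mem_range]
    constructor
    · rintro ⟨i, hi, rfl⟩
      refine ⟨⟨i, rfl⟩, ?_⟩
      show -((N*L : ℕ) : ℚ) < (μ.rowLen i : ℚ) - i - 1/2
      have h1 : (0:ℚ) ≤ (μ.rowLen i : ℚ) := Nat.cast_nonneg _
      have h2 : (i:ℚ) + 1 ≤ ((N*L : ℕ) : ℚ) := by exact_mod_cast hi
      linarith
    · rintro ⟨⟨i, rfl⟩, hx⟩
      refine ⟨i, ?_, rfl⟩
      by_contra hi
      push_neg at hi
      have hz : μ.rowLen i = 0 := rowLen_eq_zero (le_trans hKmu' hi)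
      have hx' : -((N*L : ℕ) : ℚ) < (μ.rowLen i : ℚ) - i - 1/2 := hx
      rw [hz, Nat.cast_zero] at hx'
      have h2 : ((N*L : ℕ) : ℚ) ≤ (i:ℚ) := by exact_mod_cast hi
      linarith
  have hKcast : ((N*L : ℕ) : ℚ) = (N:ℚ) * (L:ℚ) := by push_cast; ring
  have hlow : ∀ (r : Fin N) (i : ℕ), i < m r → -((N*L : ℕ) : ℚ) < e r i := by
    intro r i hi
    have h2 : (i:ℚ) + 1 ≤ (m r : ℚ) := by exact_mod_cast hi
    rw [hmL r] at h2
    have h1 : (0:ℚ) ≤ ((lam r).rowLen i : ℚ) := Nat.cast_nonneg _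
    have h3 : -(L:ℚ) < ((lam r).rowLen i : ℚ) - i - 1/2 + (p r : ℚ) + D r := by
      have := hD1 r
      linarith
    calc -((N*L : ℕ) : ℚ) = (N:ℚ) * (-(L:ℚ)) := by rw [hKcast]; ring
    _ < e r i := (mul_lt_mul_iff_right₀ hNpos).2 h3
  have hhigh : ∀ (r : Fin N) (i : ℕ), m r ≤ i → e r i ≤ -((N*L : ℕ) : ℚ) := by
    intro r i hi
    have hz : (lam r).rowLen i = 0 := rowLen_eq_zero (le_trans (hmr r) hi)
    have h2 : (m r : ℚ) ≤ (i:ℚ) := by exact_mod_cast hi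
    rw [hmL r] at h2
    have h3 : ((lam r).rowLen i : ℚ) - i - 1/2 + (p r : ℚ) + D r ≤ -(L:ℚ) := by
      rw [hz, Nat.cast_zero]
      have := hD2 r
      linarith
    calc e r i ≤ (N:ℚ) * (-(L:ℚ)) := (mul_le_mul_iff_right₀ hNpos).2 h3
    _ = -((N*L : ℕ) : ℚ) := by rw [hKcast]; ring
  have hcoe2 : (F₂ : Set ℚ) = chargedMaya N lam p ∩ Set.Ioi (-((N*L : ℕ) : ℚ)) := by
    ext x
    simp only [hF₂, Finset.coe_image, Set.mem_image, Finset.mem_coe, Finset.mem_sigma,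
      Finset.mem_univ, Finset.mem_range, true_and, Set.mem_inter_iff, Set.mem_Ioi,
      chargedMaya, Set.mem_iUnion, Set.mem_range]
    constructor
    · rintro ⟨⟨r, i⟩, hs, rfl⟩
      exact ⟨⟨r, i, rfl⟩, hlow r i hs⟩
    · rintro ⟨⟨r, i, rfl⟩, hx⟩
      refine ⟨⟨r, i⟩, ?_, rfl⟩
      by_contra hi
      push_neg at hi
      exact absurd hx (not_lt.2 (hhigh r i hi))
  have hFeq : F₁ = F₂ := Finset.coe_injective (by rw [hcoe1, hcoe2, h])
  -- sums of squares
  have hfanti : ∀ i j : ℕ, i < j → f j < f i := by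
    intro i j hij
    show (μ.rowLen j : ℚ) - j - 1/2 < (μ.rowLen i : ℚ) - i - 1/2
    have h1 : μ.rowLen j ≤ μ.rowLen i := μ.rowLen_anti i j (le_of_lt hij)
    have h1' : (μ.rowLen j : ℚ) ≤ (μ.rowLen i : ℚ) := by exact_mod_cast h1
    have h2 : (i:ℚ) + 1 ≤ (j:ℚ) := by exact_mod_cast hij
    linarith
  have hfinj : Set.InjOn f (range (N*L)) := by
    intro a _ b _ hab
    rcases lt_trichotomy a b with hlt | he' | hlt
    · exact absurd hab (hfanti a b hlt).ne'
    · exact he'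
    · exact absurd hab (hfanti b a hlt).ne
  have hE : ∀ (r : Fin N) (i : ℕ), e r i
      = (N:ℚ) * (((((lam r).rowLen i : ℤ) - i + p r - 1 : ℤ)) : ℚ) + (r:ℚ) + 1/2 := by
    intro r i
    show (N : ℚ) * (((lam r).rowLen i : ℚ) - i - 1/2 + (p r : ℚ) + D r) = _
    have hDr : D r = (((r : ℚ) + 1) - ((N : ℚ) + 1) / 2) / N := rfl
    rw [hDr]
    push_cast
    field_simp
    ring
  have heinj : Set.InjOn (fun s : Σ _ : Fin N, ℕ => e s.1 s.2)
      ((Finset.univ : Finset (Fin N)).sigma fun r => range (m r)) := by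
    rintro ⟨r, i⟩ _ ⟨r', i'⟩ _ heq
    simp only at heq
    rw [hE, hE] at heq
    set Z : ℤ := ((lam r).rowLen i : ℤ) - i + p r - 1 with hZ
    set Z' : ℤ := ((lam r').rowLen i' : ℤ) - i' + p r' - 1 with hZ'
    have hq : ((N * (Z - Z') : ℤ) : ℚ) = (((r' : ℤ) - (r : ℤ) : ℤ) : ℚ) := by
      push_cast
      linarith [heq]
    have hz : (N * (Z - Z') : ℤ) = (r' : ℤ) - (r : ℤ) := by exact_mod_cast hq
    have hrr : (r : ℤ) = (r' : ℤ) := by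
      have hdvd : (N:ℤ) ∣ ((r' : ℤ) - (r : ℤ)) := ⟨Z - Z', hz.symm⟩
      have habs : |(r' : ℤ) - (r : ℤ)| < N := by
        have h1 : (r : ℤ) < N := by exact_mod_cast r.2
        have h2 : (r' : ℤ) < N := by exact_mod_cast r'.2
        have h3 : (0:ℤ) ≤ (r : ℤ) := by positivity
        have h4 : (0:ℤ) ≤ (r' : ℤ) := by positivity
        rw [abs_lt]
        omega
      have := Int.eq_zero_of_abs_lt_dvd hdvd habs
      omega
    have hr : r = r' := by
      apply Fin.ext
      exact_mod_cast hrr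
    subst hr
    have hZZ : Z = Z' := by
      have hN1 : (1:ℤ) ≤ N := by exact_mod_cast hN
      have : (N:ℤ) * (Z - Z') = 0 := by omega
      have h0 : Z - Z' = 0 := by
        rcases mul_eq_zero.1 this with h | h
        · omega
        · exact h
      omega
    have hii : i = i' := by
      rw [hZ, hZ'] at hZZ
      rcases lt_trichotomy i i' with hlt | hee | hlt
      · have := (lam r).rowLen_anti i i' (le_of_lt hlt)
        omega
      · exact hee
      · have := (lam r).rowLen_anti i' i (le_of_lt hlt)
        omega
    subst hii
    rfl
  have hsum1 : ∑ x ∈ F₁, x^2 = ∑ i ∈ range (N*L), f i ^ 2 := by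
    rw [hF₁, Finset.sum_image (fun a ha b hb hab => hfinj (by exact_mod_cast ha) (by exact_mod_cast hb) hab)]
  have hsum2 : ∑ x ∈ F₂, x^2 = ∑ r : Fin N, ∑ i ∈ range (m r), e r i ^ 2 := by
    rw [hF₂, Finset.sum_image (fun a ha b hb hab => heinj (by exact_mod_cast ha) (by exact_mod_cast hb) hab)]
    rw [Finset.sum_sigma]
  -- left side evaluation
  have hKmu : μ.colLen 0 ≤ N * L := le_trans (by omega) (Nat.le_mul_of_pos_left _ (by omega))
  have hleft : ∑ i ∈ range (N*L), f i ^ 2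
      = (kappa μ : ℚ) + ∑ i ∈ range (N*L), ((i:ℚ) + 1/2)^2 := by
    rw [kappa_eq μ hKmu, ← Finset.sum_add_distrib]
    refine Finset.sum_congr rfl fun i _ => ?_
    rw [hf]
    ring
  -- right side evaluation
  have hright : ∀ r : Fin N, ∑ i ∈ range (m r), e r i ^ 2
      = (N:ℚ)^2 * ((kappa (lam r) : ℚ) + 2 * t r * ((lam r).card : ℚ)
          + ∑ i ∈ range (m r), ((i:ℚ) + (1/2 - t r))^2) := by
    intro r
    have hper : ∀ i ∈ range (m r), e r i ^ 2
        = (N:ℚ)^2 * ((((lam r).rowLen i : ℚ)^2 - ((lam r).rowLen i : ℚ)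
            - 2*i*((lam r).rowLen i : ℚ))
          + 2 * t r * ((lam r).rowLen i : ℚ) + ((i:ℚ) + (1/2 - t r))^2) := by
      intro i _
      show ((N : ℚ) * (((lam r).rowLen i : ℚ) - i - 1/2 + (p r : ℚ) + D r))^2 = _
      have htr : t r = (p r : ℚ) + D r := rfl
      rw [htr]
      ring
    rw [Finset.sum_congr rfl hper, ← Finset.mul_sum]
    congr 1
    rw [Finset.sum_add_distrib, Finset.sum_add_distrib,
      ← kappa_eq (lam r) (hmr r)]
    have hc : ∑ x ∈ range (m r), 2 * t r * ((lam r).rowLen x : ℚ)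
        = 2 * t r * ((lam r).card : ℚ) := by
      rw [card_eq (lam r) (hmr r), Finset.mul_sum]
    rw [hc]
  -- the D-sums
  have hDfun : ∀ r : Fin N, D r = (((r:ℚ)) + (1 - ((N:ℚ)+1)/2)) / N := by
    intro r
    show (((r : ℚ) + 1) - ((N : ℚ) + 1) / 2) / N = _
    ring
  have hSD1 : ∑ r : Fin N, D r = 0 := by
    rw [Finset.sum_congr rfl (fun r _ => hDfun r),
      Fin.sum_univ_eq_sum_range (fun i : ℕ => (((i:ℚ)) + (1 - ((N:ℚ)+1)/2)) / N) N,
      ← Finset.sum_div, sum_shift]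
    rw [div_eq_zero_iff]
    left
    ring
  have hSD2 : ∑ r : Fin N, (D r)^2 = ((N:ℚ)^2 - 1)/(12*N) := by
    rw [Finset.sum_congr rfl (fun r _ => by rw [hDfun r, div_pow]),
      Fin.sum_univ_eq_sum_range (fun i : ℕ => (((i:ℚ)) + (1 - ((N:ℚ)+1)/2))^2 / (N:ℚ)^2) N,
      ← Finset.sum_div, sum_sq_shift]
    field_simp
    ring
  have hSD3 : ∑ r : Fin N, (D r)^3 = 0 := by
    rw [Finset.sum_congr rfl (fun r _ => by rw [hDfun r, div_pow]),
      Fin.sum_univ_eq_sum_range (fun i : ℕ => (((i:ℚ)) + (1 - ((N:ℚ)+1)/2))^3 / (N:ℚ)^3) N,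
      ← Finset.sum_div, sum_cube_shift]
    rw [div_eq_zero_iff]
    left
    ring
  have hSt : ∑ r : Fin N, t r = 0 := by
    have hq : ∑ r : Fin N, (p r : ℚ) = 0 := by exact_mod_cast congrArg (Int.cast : ℤ → ℚ) hp
    rw [ht]
    simp only
    rw [Finset.sum_add_distrib, hq, hSD1, add_zero]
  -- per-r closed form for the vacuum-type sum
  have hA : ∀ r : Fin N, ∑ i ∈ range (m r), ((i:ℚ) + (1/2 - t r))^2
      = (t r)^3/3 - (t r)/12 + ((L:ℚ) - D r)^3/3 - ((L:ℚ) - D r)/12 := by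
    intro r
    rw [sum_sq_shift, hmL r]
    have : t r = (p r : ℚ) + D r := rfl
    rw [this]
    ring
  -- final assembly
  have key : (kappa μ : ℚ) + ∑ i ∈ range (N*L), ((i:ℚ) + 1/2)^2
      = ∑ r : Fin N, ∑ i ∈ range (m r), e r i ^ 2 := by
    rw [← hsum2, ← hFeq, hsum1, hleft]
  have hQ : ∑ i ∈ range (N*L), ((i:ℚ)+1/2)^2
      = ((N:ℚ)*(L:ℚ))^3/3 - (N:ℚ)*(L:ℚ)/12 := by
    rw [sum_sq_shift, hKcast]
    ring
  have h1 : ∑ r : Fin N, ((L:ℚ) - D r) = (N:ℚ)*(L:ℚ) := by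
    rw [Finset.sum_sub_distrib, hSD1, Finset.sum_const, Finset.card_univ,
      Fintype.card_fin, nsmul_eq_mul]
    ring
  have h3 : ∑ r : Fin N, ((L:ℚ) - D r)^3
      = (N:ℚ)*(L:ℚ)^3 + 3*(L:ℚ)*(((N:ℚ)^2-1)/(12*(N:ℚ))) := by
    rw [Finset.sum_congr rfl (fun r _ => by ring :
      ∀ r ∈ Finset.univ, ((L:ℚ) - D r)^3
        = (L:ℚ)^3 - 3*(L:ℚ)^2*(D r) + 3*(L:ℚ)*(D r)^2 - (D r)^3)]
    rw [Finset.sum_sub_distrib, Finset.sum_add_distrib, Finset.sum_sub_distrib,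
      ← Finset.mul_sum, ← Finset.mul_sum, hSD1, hSD2, hSD3,
      Finset.sum_const, Finset.card_univ, Fintype.card_fin, nsmul_eq_mul]
    ring
  have hAsum : (N:ℚ)^2 * ∑ r : Fin N, (∑ i ∈ range (m r), ((i:ℚ) + (1/2 - t r))^2)
      = (N:ℚ)^2/3 * (∑ r : Fin N, (t r)^3) + (((N:ℚ)*(L:ℚ))^3/3 - (N:ℚ)*(L:ℚ)/12) := by
    rw [Finset.sum_congr rfl (fun r _ => hA r)]
    have hsplit : ∑ r : Fin N, ((t r)^3/3 - (t r)/12 + ((L:ℚ) - D r)^3/3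
          - ((L:ℚ) - D r)/12)
        = (∑ r : Fin N, (t r)^3)/3 - (∑ r : Fin N, t r)/12
          + (∑ r : Fin N, ((L:ℚ) - D r)^3)/3 - (∑ r : Fin N, ((L:ℚ) - D r))/12 := by
      rw [Finset.sum_sub_distrib, Finset.sum_add_distrib, Finset.sum_sub_distrib,
        ← Finset.sum_div, ← Finset.sum_div, ← Finset.sum_div, ← Finset.sum_div]
    rw [hsplit, hSt, h1, h3]
    field_simp
    ring
  have hRHS : ∑ r : Fin N, ∑ i ∈ range (m r), e r i ^ 2
      = (N:ℚ)^2 * (∑ r, (kappa (lam r) : ℚ))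
        + 2*(N:ℚ)^2 * (∑ r : Fin N, t r * ((lam r).card : ℚ))
        + (N:ℚ)^2 * ∑ r : Fin N, (∑ i ∈ range (m r), ((i:ℚ) + (1/2 - t r))^2) := by
    rw [Finset.sum_congr rfl (fun r _ => hright r), ← Finset.mul_sum,
      Finset.sum_add_distrib, Finset.sum_add_distrib]
    rw [show (∑ r : Fin N, 2 * t r * ((lam r).card : ℚ))
        = 2 * ∑ r : Fin N, t r * ((lam r).card : ℚ) from by
      rw [Finset.mul_sum]
      exact Finset.sum_congr rfl fun r _ => by ring]
    ring
  rw [hRHS] at key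
  linarith [key, hAsum, hQ]
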